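/- arXiv:1803.10811 — 6 statements merged into one kernel-verified Lean document; each statement's English description precedes it below -/
import Mathlib

section
/- For N ≥ 2, the polynomial x^N + x - 1 is irreducible over ℚ whenever N is not congruent to 5 mod 6, and x^N - x + 1 is irreducible over ℚ whenever N is not congruent to 2 mod 6. -/
open Polynomial

namespace TrinomialAux

theorem aux (n : ℕ) (hn : 1 < n) (hn3 : n % 3 ≠ 2) (z : ℂ) :
    ¬(z ^ n + z + 1 = 0 ∧ z ^ n + z ^ (n - 1) + 1 = 0) := by
  rintro ⟨h1, h2⟩
  have z_ne_zero : z ≠ 0 := by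
    rintro rfl
    rw [zero_pow (by omega), zero_add, zero_add] at h1
    exact one_ne_zero h1
  have hz1 : z ^ (n - 1) = z := by linear_combination h2 - h1
  have hz2 : z ^ n = z ^ 2 := by
    calc z ^ n = z ^ (n - 1 + 1) := by rw [Nat.sub_add_cancel (by omega)]
    _ = z ^ (n - 1) * z := pow_succ z (n - 1)
    _ = z * z := by rw [hz1]
    _ = z ^ 2 := (sq z).symm
  have hq : z ^ 2 + z + 1 = 0 := by rw [← hz2]; exact h1
  have h3 : z ^ 3 = 1 := by linear_combination (z - 1) * hq
  have key : z ^ n = 1 ∨ z ^ n = z := by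
    rw [← Nat.mod_add_div n 3, pow_add, pow_mul, h3, one_pow, mul_one]
    have hr : n % 3 = 0 ∨ n % 3 = 1 := by omega
    rcases hr with hr | hr <;> rw [hr] <;> simp
  have hzne : z ≠ 1 := by
    rintro rfl
    norm_num at hq
  rcases key with key | key
  · rw [hz2] at key
    exact hzne (by linear_combination h3 - z * key)
  · rw [hz2, sq] at key
    exact hzne (mul_left_cancel₀ z_ne_zero (by rw [key, mul_one]))

theorem X_pow_add_X_add_one_irreducible_int (n : ℕ) (hn : 1 < n) (hn3 : n % 3 ≠ 2) :
    Irreducible (X ^ n + X + 1 : ℤ[X]) := by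
  have hp : (X ^ n + X + 1 : ℤ[X]) = trinomial 0 1 n 1 1 1 := by
    simp only [trinomial, C_1]; ring
  rw [hp]
  apply IsUnitTrinomial.irreducible_of_coprime' ⟨0, 1, n, zero_lt_one, hn, 1, 1, 1, rfl⟩
  rintro z ⟨h1, h2⟩
  apply aux n hn hn3 z
  rw [trinomial_mirror zero_lt_one hn (1 : ℤˣ).ne_zero (1 : ℤˣ).ne_zero] at h2
  simp_rw [trinomial, aeval_add, aeval_mul, aeval_X_pow, aeval_C, Units.val_one,
    map_one] at h1 h2
  constructor
  · linear_combination h1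
  · linear_combination h2

theorem X_pow_add_X_add_one_irreducible_rat (n : ℕ) (hn : 1 < n) (hn3 : n % 3 ≠ 2) :
    Irreducible (X ^ n + X + 1 : ℚ[X]) := by
  have hp : (X ^ n + X + 1 : ℤ[X]) = trinomial 0 1 n 1 1 1 := by
    simp only [trinomial, C_1]; ring
  have h := (IsPrimitive.Int.irreducible_iff_irreducible_map_cast ?_).mp
    (X_pow_add_X_add_one_irreducible_int n hn hn3)
  · rwa [Polynomial.map_add, Polynomial.map_add, Polynomial.map_pow, Polynomial.map_one,
      Polynomial.map_X] at h
  · exact hp.symm ▸ (trinomial_monic zero_lt_one hn).isPrimitive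

/-- The algebra automorphism of `ℚ[X]` sending `X` to `-X`. -/
noncomputable def negX : ℚ[X] ≃ₐ[ℚ] ℚ[X] :=
  AlgEquiv.ofAlgHom (aeval (-X)) (aeval (-X))
    (by ext1; simp) (by ext1; simp)

theorem negX_apply (p : ℚ[X]) : negX p = aeval (-X : ℚ[X]) p := rfl

theorem irreducible_negX {p : ℚ[X]} (h : Irreducible p) :
    Irreducible (negX p) :=
  h.map negX

theorem irr_neg {p : ℚ[X]} (h : Irreducible p) : Irreducible (-p) := by
  have ha : Associated p (-p) := ⟨-1, by simp⟩
  exact ha.irreducible h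

end TrinomialAux

theorem irreducible_trinomials_mod_six (N : ℕ) (hN : 2 ≤ N) :
    (¬ N % 6 = 5 → Irreducible (X ^ N + X - 1 : ℚ[X])) ∧
    (¬ N % 6 = 2 → Irreducible (X ^ N - X + 1 : ℚ[X])) := by
  have hN1 : N ≠ 1 := by omega
  have hsel : Irreducible (X ^ N - X - 1 : ℚ[X]) :=
    Polynomial.X_pow_sub_X_sub_one_irreducible_rat hN1
  rcases Nat.even_or_odd N with he | ho
  · -- N even
    rw [Nat.even_iff] at he
    have hNeg : (-X : ℚ[X]) ^ N = X ^ N := by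
      rw [neg_pow, Nat.even_iff.mpr he |>.neg_one_pow, one_mul]
    constructor
    · intro _
      have h := TrinomialAux.irreducible_negX hsel
      have heq : TrinomialAux.negX (X ^ N - X - 1) = X ^ N + X - 1 := by
        simp only [TrinomialAux.negX_apply, map_sub, map_pow, map_one, aeval_X, hNeg]
        ring
      rwa [heq] at h
    · intro h2
      have hn3 : N % 3 ≠ 2 := by omega
      have hq := TrinomialAux.X_pow_add_X_add_one_irreducible_rat N (by omega) hn3
      have h := TrinomialAux.irreducible_negX hq
      have heq : TrinomialAux.negX (X ^ N + X + 1) = X ^ N - X + 1 := by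
        simp only [TrinomialAux.negX_apply, map_add, map_pow, map_one, aeval_X, hNeg]
        ring
      rwa [heq] at h
  · -- N odd
    rw [Nat.odd_iff] at ho
    have hNeg : (-X : ℚ[X]) ^ N = -(X ^ N) := by
      rw [neg_pow, Nat.odd_iff.mpr ho |>.neg_one_pow, neg_one_mul]
    constructor
    · intro h5
      have hn3 : N % 3 ≠ 2 := by omega
      have hq := TrinomialAux.X_pow_add_X_add_one_irreducible_rat N (by omega) hn3
      have h := TrinomialAux.irr_neg (TrinomialAux.irreducible_negX hq)
      have heq : -(TrinomialAux.negX (X ^ N + X + 1)) = X ^ N + X - 1 := by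
        simp only [TrinomialAux.negX_apply, map_add, map_pow, map_one, aeval_X, hNeg]
        ring
      rwa [heq] at h
    · intro _
      have h := TrinomialAux.irr_neg (TrinomialAux.irreducible_negX hsel)
      have heq : -(TrinomialAux.negX (X ^ N - X - 1)) = X ^ N - X + 1 := by
        simp only [TrinomialAux.negX_apply, map_sub, map_pow, map_one, aeval_X, hNeg]
        ring
      rwa [heq] at h
end

section
/- Let a, b, f ∈ ℤ[x] with deg a < 2m, deg b < 2m, deg f < m, f(0) ≠ 0, and ab ≡ f mod x^{2m}. Write a|_m and b|_m for the truncations of a and b to degree < m. Then exactly one of the following holds: (1) ab = f; (2) ab ≠ f, a|_m · b|_m ≠ f, and ‖a|_m‖ + ‖b|_m‖ ≤ ‖a‖ + ‖b‖ - 1; (3) ab ≠ f, a|_m · b|_m = f, and ‖a|_m‖ + ‖b|_m‖ ≤ ‖a‖ + ‖b‖ - 2. -/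
open Polynomial

/-- The weight of an integer polynomial: the sum of the squares of its coefficients. -/
def weight (f : ℤ[X]) : ℤ :=
  ∑ i ∈ Finset.range (f.natDegree + 1), (f.coeff i) ^ 2

lemma weight_eq_sum (p : ℤ[X]) (N : ℕ) (h : p.natDegree < N) :
    weight p = ∑ i ∈ Finset.range N, (p.coeff i) ^ 2 := by
  apply Finset.sum_subset
  · intro i hi
    simp only [Finset.mem_range] at *
    omega
  · intro i hi hni
    simp only [Finset.mem_range] at *
    have : p.natDegree < i := by omega
    rw [coeff_eq_zero_of_natDegree_lt this]
    ring

lemma coeff_mod_X_pow (m : ℕ) (p : ℤ[X]) (i : ℕ) :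
    (p %ₘ X ^ m).coeff i = if i < m then p.coeff i else 0 := by
  have hd : (p %ₘ X ^ m).degree < (m : ℕ) := by
    simpa [degree_X_pow] using degree_modByMonic_lt p (monic_X_pow (R := ℤ) m)
  split_ifs with h
  · conv_rhs => rw [← modByMonic_add_div p (X ^ m)]
    rw [coeff_add, coeff_X_pow_mul']
    simp [Nat.not_le.mpr h]
  · exact coeff_eq_zero_of_degree_lt
      (lt_of_lt_of_le hd (by exact_mod_cast Nat.cast_le.mpr (Nat.not_lt.mp h)))

lemma mod_natDegree_lt (m : ℕ) (hm : 0 < m) (p : ℤ[X]) : (p %ₘ X ^ m).natDegree < m := by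
  have hd : (p %ₘ X ^ m).degree < (m : ℕ) := by
    simpa [degree_X_pow] using degree_modByMonic_lt p (monic_X_pow (R := ℤ) m)
  by_cases h : p %ₘ X ^ m = 0
  · simpa [h] using hm
  · exact (natDegree_lt_iff_degree_lt h).mpr hd

lemma weight_split (m : ℕ) (hm : 0 < m) (p : ℤ[X]) (hp : p.natDegree < 2 * m) :
    weight p = weight (p %ₘ X ^ m) + ∑ i ∈ Finset.Ico m (2 * m), (p.coeff i) ^ 2 := by
  rw [weight_eq_sum p (2 * m) hp, weight_eq_sum (p %ₘ X ^ m) m (mod_natDegree_lt m hm p)]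
  rw [Finset.range_eq_Ico, ← Finset.sum_Ico_consecutive _ (Nat.zero_le m) (by omega : m ≤ 2 * m)]
  congr 1
  rw [Finset.range_eq_Ico]
  apply Finset.sum_congr rfl
  intro i hi
  simp only [Finset.mem_Ico] at hi
  rw [coeff_mod_X_pow, if_pos hi.2]

lemma high_sum_nonneg (m : ℕ) (p : ℤ[X]) :
    0 ≤ ∑ i ∈ Finset.Ico m (2 * m), (p.coeff i) ^ 2 :=
  Finset.sum_nonneg fun i _ => sq_nonneg _

lemma high_sum_one (m : ℕ) (hm : 0 < m) (p : ℤ[X]) (hp : p.natDegree < 2 * m)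
    (hne : p %ₘ X ^ m ≠ p) :
    1 ≤ ∑ i ∈ Finset.Ico m (2 * m), (p.coeff i) ^ 2 := by
  have : ∃ i ∈ Finset.Ico m (2 * m), p.coeff i ≠ 0 := by
    by_contra hc
    push_neg at hc
    apply hne
    ext i
    rw [coeff_mod_X_pow]
    split_ifs with h
    · rfl
    · by_cases h2 : i < 2 * m
      · exact (hc i (Finset.mem_Ico.mpr ⟨Nat.not_lt.mp h, h2⟩)).symm
      · exact (coeff_eq_zero_of_natDegree_lt (by omega)).symm
  obtain ⟨i, hi, hci⟩ := this
  calc (1 : ℤ) ≤ (p.coeff i) ^ 2 := by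
        rcases lt_or_gt_of_ne hci with h | h <;> nlinarith
    _ ≤ ∑ i ∈ Finset.Ico m (2 * m), (p.coeff i) ^ 2 :=
        Finset.single_le_sum (f := fun j => (p.coeff j) ^ 2) (fun j _ => sq_nonneg _) hi

lemma key_lemma (m : ℕ) (hm : 0 < m) (a b f : ℤ[X]) (hb : b.natDegree < 2 * m)
    (ha0 : a.coeff 0 ≠ 0) (hcong : (X : ℤ[X]) ^ (2 * m) ∣ a * b - f)
    (h2 : a * (b %ₘ X ^ m) = f) : b %ₘ X ^ m = b := by
  set q := b /ₘ X ^ m with hq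
  have hdiv : b %ₘ X ^ m + X ^ m * q = b := modByMonic_add_div b (X ^ m)
  have hb' : b - b %ₘ X ^ m = X ^ m * q := by linear_combination -hdiv
  have heq : a * b - f = X ^ m * (a * q) := by
    rw [← h2]; linear_combination a * hb'
  rw [heq, two_mul, pow_add] at hcong
  have hXm : (X : ℤ[X]) ^ m ≠ 0 := pow_ne_zero m X_ne_zero
  have hdvd : (X : ℤ[X]) ^ m ∣ a * q := (mul_dvd_mul_iff_left hXm).mp hcong
  have hXa : ¬ (X : ℤ[X]) ∣ a := by
    intro ⟨c, hc⟩
    apply ha0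
    rw [hc, mul_comm, coeff_mul_X_zero]
  have hdq : (X : ℤ[X]) ^ m ∣ q := prime_X.pow_dvd_of_dvd_mul_left m hXa hdvd
  have hq0 : q = 0 := by
    by_contra hq0
    have h1 : m ≤ q.natDegree := by
      have := natDegree_le_of_dvd hdq hq0
      simpa [natDegree_X_pow] using this
    have h2 : q.natDegree = b.natDegree - m := by
      rw [hq, natDegree_divByMonic _ (monic_X_pow m), natDegree_X_pow]
    omega
  rw [hq0, mul_zero, add_zero] at hdiv
  exact hdiv

theorem truncation_trichotomy (m : ℕ) (a b f : ℤ[X])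
    (ha : a.natDegree < 2 * m) (hb : b.natDegree < 2 * m) (hf : f.natDegree < m)
    (hf0 : f.coeff 0 ≠ 0) (hcong : (X : ℤ[X]) ^ (2 * m) ∣ a * b - f) :
    (a * b = f) ∨
    (a * b ≠ f ∧ (a %ₘ X ^ m) * (b %ₘ X ^ m) ≠ f ∧
      weight (a %ₘ X ^ m) + weight (b %ₘ X ^ m) ≤ weight a + weight b - 1) ∨
    (a * b ≠ f ∧ (a %ₘ X ^ m) * (b %ₘ X ^ m) = f ∧
      weight (a %ₘ X ^ m) + weight (b %ₘ X ^ m) ≤ weight a + weight b - 2) := by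
  have hm : 0 < m := by omega
  by_cases h1 : a * b = f
  · exact Or.inl h1
  -- coeff 0 facts
  have hc0 : (a * b - f).coeff 0 = 0 := by
    have hXdvd : (X : ℤ[X]) ∣ a * b - f :=
      dvd_trans (dvd_pow_self X (by omega : 2 * m ≠ 0)) hcong
    obtain ⟨d, hd⟩ := hXdvd
    rw [hd, mul_comm, coeff_mul_X_zero]
  have hab0 : a.coeff 0 * b.coeff 0 = f.coeff 0 := by
    have := hc0
    rw [coeff_sub, mul_coeff_zero] at this
    linarith
  have ha0 : a.coeff 0 ≠ 0 := fun h => hf0 (by rw [← hab0, h, zero_mul])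
  have hb0 : b.coeff 0 ≠ 0 := fun h => hf0 (by rw [← hab0, h, mul_zero])
  have ha0' : (a %ₘ X ^ m).coeff 0 = a.coeff 0 := by rw [coeff_mod_X_pow, if_pos hm]
  have hb0' : (b %ₘ X ^ m).coeff 0 = b.coeff 0 := by rw [coeff_mod_X_pow, if_pos hm]
  -- weight splits
  have wsa := weight_split m hm a ha
  have wsb := weight_split m hm b hb
  have hSa := high_sum_nonneg m a
  have hSb := high_sum_nonneg m b
  by_cases h2 : (a %ₘ X ^ m) * (b %ₘ X ^ m) = f
  · -- case 3 : show both truncations proper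
    right; right
    refine ⟨h1, h2, ?_⟩
    have hane : a %ₘ X ^ m ≠ a := by
      intro hae
      have hbe : b %ₘ X ^ m = b := by
        apply key_lemma m hm (a %ₘ X ^ m) b f hb (ha0'.symm ▸ ha0)
        · rwa [hae]
        · exact h2
      apply h1
      rw [← hae, ← hbe, h2]
    have hbne : b %ₘ X ^ m ≠ b := by
      intro hbe
      have hae : a %ₘ X ^ m = a := by
        apply key_lemma m hm (b %ₘ X ^ m) a f ha (hb0'.symm ▸ hb0)
        · rw [hbe, mul_comm b a]; exact hcong
        · rw [mul_comm]; exact h2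
      apply h1
      rw [← hae, ← hbe, h2]
    have h1a := high_sum_one m hm a ha hane
    have h1b := high_sum_one m hm b hb hbne
    linarith
  · -- case 2
    right; left
    refine ⟨h1, h2, ?_⟩
    have : a %ₘ X ^ m ≠ a ∨ b %ₘ X ^ m ≠ b := by
      by_contra hc
      push_neg at hc
      apply h1
      have habf : a * b - f = 0 := by
        by_contra hne
        have hle : 2 * m ≤ (a * b - f).natDegree := by
          have := natDegree_le_of_dvd hcong hne
          simpa [natDegree_X_pow] using this
        have hdab : (a * b).natDegree < 2 * m := by
          calc (a * b).natDegree ≤ a.natDegree + b.natDegree := natDegree_mul_le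
            _ = (a %ₘ X ^ m).natDegree + (b %ₘ X ^ m).natDegree := by rw [hc.1, hc.2]
            _ < 2 * m := by
                have := mod_natDegree_lt m hm a
                have := mod_natDegree_lt m hm b
                omega
        have hdd : (a * b - f).natDegree < 2 * m :=
          lt_of_le_of_lt (natDegree_sub_le _ _) (by omega)
        omega
      exact sub_eq_zero.mp habf
    rcases this with h | h
    · have := high_sum_one m hm a ha h
      linarith
    · have := high_sum_one m hm b hb h
      linarith
end

section
/- Let l ≥ 5 be prime and 1 ≤ k ≤ l²/2. If a = a₀ + a₁x and b = b₀ + b₁x are integer polynomials with 1 ≤ a₀ ≤ b₀, a₀b₀ = l, a₀b₁ + a₁b₀ = kl, and a₀² + a₁² + b₀² + b₁² ≤ 1 + k² + l², then (a₀, a₁, b₀, b₁) = (1, k, l, 0). -/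
theorem m0_linear_constant_prime (l k : ℤ) (hl : 5 ≤ l) (hlp : Prime l)
    (hk1 : 1 ≤ k) (hk2 : 2 * k ≤ l ^ 2)
    (a₀ a₁ b₀ b₁ : ℤ) (ha₀ : 1 ≤ a₀) (hab : a₀ ≤ b₀)
    (h1 : a₀ * b₀ = l) (h2 : a₀ * b₁ + a₁ * b₀ = k * l)
    (hw : a₀ ^ 2 + a₁ ^ 2 + b₀ ^ 2 + b₁ ^ 2 ≤ 1 + k ^ 2 + l ^ 2) :
    a₀ = 1 ∧ a₁ = k ∧ b₀ = l ∧ b₁ = 0 := by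
  have ha1 : a₀ = 1 := by
    rcases hlp.irreducible.isUnit_or_isUnit h1.symm with hu | hu
    · rcases Int.isUnit_iff.mp hu with h | h
      · exact h
      · omega
    · rcases Int.isUnit_iff.mp hu with h | h
      · subst h; nlinarith
      · nlinarith
  have hb0 : b₀ = l := by rw [ha1, one_mul] at h1; exact h1
  rw [ha1, hb0, one_mul] at h2; rw [ha1, hb0] at hw
  have hb1 : b₁ = (k - a₁) * l := by nlinarith [h2]
  have ha1k : a₁ = k := by
    rw [hb1] at hw
    have key : a₁ ^ 2 + (k - a₁) ^ 2 * l ^ 2 ≤ k ^ 2 := by nlinarith [hw]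
    rcases lt_trichotomy a₁ k with h | h | h
    · exfalso
      have hd : 1 ≤ k - a₁ := by omega
      have h6 : 0 ≤ ((k - a₁) ^ 2 - (k - a₁)) * l ^ 2 := by
        have : 0 ≤ (k - a₁) ^ 2 - (k - a₁) := by nlinarith
        positivity
      have h7 : (k - a₁) * (2 * k) ≤ (k - a₁) * l ^ 2 :=
        mul_le_mul_of_nonneg_left hk2 (by omega)
      nlinarith [sq_nonneg a₁]
    · exact h
    · exfalso
      have hd : k - a₁ ≤ -1 := by omega
      nlinarith [sq_nonneg (k - a₁), sq_nonneg a₁, sq_nonneg l]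
  exact ⟨ha1, ha1k, hb0, by rw [hb1, ha1k]; ring⟩
end

section
/- Let f ∈ ℤ[x] be monic of degree N ≥ 2 with coefficients a_0, ..., a_{N-1} (a_0 ≠ 0) satisfying |a_{N-1}| > 1 + |a_0| + |a_1| + ... + |a_{N-2}|. Then f is irreducible over ℚ. -/
open Polynomial

private lemma perron_prod_lt_one (s : Multiset ℝ) :
    (∀ x ∈ s, 0 ≤ x ∧ x < 1) → s.prod ≤ 1 ∧ (s ≠ 0 → s.prod < 1) := by
  induction s using Multiset.induction_on with
  | empty => simp
  | cons a t ih =>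
    intro h
    have ha := h a (Multiset.mem_cons_self a t)
    have ht : ∀ x ∈ t, 0 ≤ x ∧ x < 1 := fun x hx => h x (Multiset.mem_cons_of_mem hx)
    have htp : 0 ≤ t.prod := Multiset.prod_nonneg fun x hx => (ht x hx).1
    have h1 := (ih ht).1
    rw [Multiset.prod_cons]
    constructor
    · nlinarith [ha.1, ha.2]
    · intro _; nlinarith [ha.1, ha.2]

private lemma perron_norm_prod (s : Multiset ℂ) : ‖s.prod‖ = (s.map fun a => ‖a‖).prod := by
  induction s using Multiset.induction_on with
  | empty => simp
  | cons a t ih => rw [Multiset.prod_cons, Multiset.map_cons, Multiset.prod_cons, norm_mul, ih]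

private lemma perron_root_bound (P : ℂ[X]) (hP : P.Monic) (hm : 1 ≤ P.natDegree) {w : ℂ}
    (hw : P.eval w = 0) (h1 : 1 ≤ ‖w‖) :
    ‖w‖ ≤ ∑ i ∈ Finset.range P.natDegree, ‖P.coeff i‖ := by
  set m := P.natDegree with hmdef
  have he := eval_eq_sum_range (p := P) w
  rw [hw, Finset.sum_range_succ, hP.coeff_natDegree, one_mul] at he
  have hw2 : w ^ m = -∑ i ∈ Finset.range m, P.coeff i * w ^ i := by
    linear_combination -he
  have key : ‖w‖ ^ m ≤ (∑ i ∈ Finset.range m, ‖P.coeff i‖) * ‖w‖ ^ (m - 1) := by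
    calc ‖w‖ ^ m = ‖w ^ m‖ := (norm_pow _ _).symm
      _ = ‖∑ i ∈ Finset.range m, P.coeff i * w ^ i‖ := by rw [hw2, norm_neg]
      _ ≤ ∑ i ∈ Finset.range m, ‖P.coeff i * w ^ i‖ := norm_sum_le _ _
      _ ≤ ∑ i ∈ Finset.range m, ‖P.coeff i‖ * ‖w‖ ^ (m - 1) := by
          refine Finset.sum_le_sum fun i hi => ?_
          rw [norm_mul, norm_pow]
          refine mul_le_mul_of_nonneg_left ?_ (norm_nonneg _)
          exact pow_le_pow_right₀ h1 (by have := Finset.mem_range.mp hi; omega)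
      _ = (∑ i ∈ Finset.range m, ‖P.coeff i‖) * ‖w‖ ^ (m - 1) := by
          rw [Finset.sum_mul]
  have hpow : (0:ℝ) < ‖w‖ ^ (m - 1) := pow_pos (lt_of_lt_of_le one_pos h1) _
  have hsplit : ‖w‖ ^ m = ‖w‖ * ‖w‖ ^ (m - 1) := by
    rw [mul_comm, ← pow_succ]
    congr 1
    omega
  rw [hsplit] at key
  exact le_of_mul_le_mul_right key hpow

private lemma perron_factor_false (g : ℤ[X]) (hg : g.Monic) (hd : 1 ≤ g.natDegree)
    (h0 : g.coeff 0 ≠ 0)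
    (hroots : ∀ w : ℂ, (g.map (Int.castRingHom ℂ)).eval w = 0 → ‖w‖ < 1) : False := by
  set G := g.map (Int.castRingHom ℂ) with hG
  have hGm : G.Monic := hg.map _
  have hGd : G.natDegree = g.natDegree := hg.natDegree_map _
  have hsplit : G.Splits := IsAlgClosed.splits G
  have heq := hsplit.eq_prod_roots_of_monic hGm
  have hcard : G.roots.card = G.natDegree := splits_iff_card_roots.mp hsplit
  have hGne : G ≠ 0 := hGm.ne_zero
  have hv : G.eval 0 = (G.roots.map fun a => (0:ℂ) - a).prod := by
    conv_lhs => rw [heq]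
    rw [eval_multiset_prod, Multiset.map_map]
    simp
  have hnorm : ‖G.eval 0‖ = (G.roots.map fun a => ‖a‖).prod := by
    rw [hv, perron_norm_prod, Multiset.map_map]
    congr 1
    exact Multiset.map_congr rfl fun x _ => by simp
  have hmem : ∀ x ∈ G.roots.map fun a => ‖a‖, 0 ≤ x ∧ x < 1 := by
    intro x hx
    obtain ⟨a, ha, rfl⟩ := Multiset.mem_map.mp hx
    refine ⟨norm_nonneg _, hroots a ?_⟩
    exact (isRoot_of_mem_roots ha)
  have hne : G.roots.map (fun a => ‖a‖) ≠ 0 := by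
    intro h
    have := Multiset.card_eq_zero.mpr h
    rw [Multiset.card_map, hcard, hGd] at this
    omega
  have hlt : ‖G.eval 0‖ < 1 := by
    rw [hnorm]; exact (perron_prod_lt_one _ hmem).2 hne
  have hge : (1:ℝ) ≤ ‖G.eval 0‖ := by
    have : G.eval 0 = ((g.coeff 0 : ℤ) : ℂ) := by
      rw [← coeff_zero_eq_eval_zero, hG, coeff_map]
      rfl
    rw [this, Complex.norm_intCast]
    exact_mod_cast Int.one_le_abs h0
  linarith

private lemma perron_main (f : ℤ[X]) (N : ℕ) (hN : 2 ≤ N)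
    (hmonic : f.Monic) (hdeg : f.natDegree = N) (h0 : f.coeff 0 ≠ 0)
    (hperron : 1 + ∑ i ∈ Finset.range (N - 1), |f.coeff i| < |f.coeff (N - 1)|)
    (p q : ℤ[X]) (hf : f = p * q) (hp : p.Monic) (hq : q.Monic)
    (hdp : 1 ≤ p.natDegree) (hdq : 1 ≤ q.natDegree) : False := by
  set F := f.map (Int.castRingHom ℂ) with hF
  have hFm : F.Monic := hmonic.map _
  have hFd : F.natDegree = N := by rw [hF, hmonic.natDegree_map, hdeg]
  set S : ℝ := ∑ i ∈ Finset.range (N - 1), ‖F.coeff i‖ with hS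
  have hSnn : 0 ≤ S := Finset.sum_nonneg fun _ _ => norm_nonneg _
  have hcoeff : ∀ i, ‖F.coeff i‖ = ((|f.coeff i| : ℤ) : ℝ) := by
    intro i
    rw [hF, coeff_map]
    show ‖((f.coeff i : ℤ) : ℂ)‖ = _
    rw [Complex.norm_intCast]
    push_cast
    rfl
  have hSeq : S = ((∑ i ∈ Finset.range (N - 1), |f.coeff i| : ℤ) : ℝ) := by
    rw [hS]
    push_cast
    refine Finset.sum_congr rfl fun i _ => ?_
    rw [hcoeff i]
    push_cast
    rfl
  have hA : S + 2 ≤ ‖F.coeff (N - 1)‖ := by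
    rw [hcoeff, hSeq]
    have h2 : (∑ i ∈ Finset.range (N - 1), |f.coeff i|) + 2 ≤ |f.coeff (N - 1)| := by omega
    exact_mod_cast h2
  -- existence of a root of norm ≥ 1
  have hex : ∃ z : ℂ, F.eval z = 0 ∧ 1 ≤ ‖z‖ := by
    by_contra hc
    push_neg at hc
    exact perron_factor_false f hmonic (by omega) h0 fun w hw => hc w hw
  obtain ⟨z, hz, hz1⟩ := hex
  set r := ‖z‖ with hr
  -- the big root is bigger than S + 1
  have hzeq : F.coeff (N - 1) * z ^ (N - 1) =
      -(z ^ N + ∑ i ∈ Finset.range (N - 1), F.coeff i * z ^ i) := by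
    have h1 := eval_eq_sum_range (p := F) z
    rw [hFd, hz] at h1
    have hcN : F.coeff N = 1 := by rw [← hFd]; exact hFm.coeff_natDegree
    have e1 : ∑ i ∈ Finset.range (N + 1), F.coeff i * z ^ i =
        ∑ i ∈ Finset.range N, F.coeff i * z ^ i + F.coeff N * z ^ N :=
      Finset.sum_range_succ _ _
    have e2 : ∑ i ∈ Finset.range ((N - 1) + 1), F.coeff i * z ^ i =
        ∑ i ∈ Finset.range (N - 1), F.coeff i * z ^ i + F.coeff (N - 1) * z ^ (N - 1) :=
      Finset.sum_range_succ _ _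
    rw [show (N - 1) + 1 = N from by omega] at e2
    rw [e1, e2, hcN, one_mul] at h1
    linear_combination -h1
  have hnorm1 : ‖F.coeff (N - 1)‖ * r ^ (N - 1) ≤ r ^ N + S * r ^ (N - 2) := by
    have hstep : ‖F.coeff (N - 1) * z ^ (N - 1)‖ ≤
        ‖z ^ N‖ + ∑ i ∈ Finset.range (N - 1), ‖F.coeff i * z ^ i‖ := by
      rw [hzeq, norm_neg]
      exact (norm_add_le _ _).trans (by gcongr; exact norm_sum_le _ _)
    have h2 : ∑ i ∈ Finset.range (N - 1), ‖F.coeff i * z ^ i‖ ≤ S * r ^ (N - 2) := by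
      rw [hS, Finset.sum_mul]
      refine Finset.sum_le_sum fun i hi => ?_
      rw [norm_mul, norm_pow]
      refine mul_le_mul_of_nonneg_left ?_ (norm_nonneg _)
      exact pow_le_pow_right₀ hz1 (by have := Finset.mem_range.mp hi; omega)
    have h3 : ‖F.coeff (N - 1) * z ^ (N - 1)‖ = ‖F.coeff (N - 1)‖ * r ^ (N - 1) := by
      rw [norm_mul, norm_pow]
    rw [h3, norm_pow] at hstep
    linarith
  have hr2 : S + 1 < r := by
    have hp2 : (0:ℝ) < r ^ (N - 2) := pow_pos (by linarith) _
    have e3 : r ^ (N - 1) = r ^ (N - 2) * r := by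
      rw [← pow_succ]; congr 1; omega
    have e4 : r ^ N = r ^ (N - 2) * r ^ 2 := by
      rw [← pow_add]; congr 1; omega
    rw [e3, e4] at hnorm1
    have h6 : r ^ (N - 2) * ((S + 2) * r) ≤ r ^ (N - 2) * (r ^ 2 + S) := by
      have h7 : (S + 2) * (r ^ (N - 2) * r) ≤ ‖F.coeff (N - 1)‖ * (r ^ (N - 2) * r) := by
        refine mul_le_mul_of_nonneg_right hA ?_
        positivity
      nlinarith
    have h5 : (S + 2) * r ≤ r ^ 2 + S := le_of_mul_le_mul_left h6 hp2
    by_contra hcon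
    push_neg at hcon
    nlinarith [mul_nonneg (sub_nonneg.mpr hz1) (sub_nonneg.mpr hcon)]
  -- divide out the big root
  have hroot : IsRoot F z := hz
  have hdvd : (X - C z) * (F /ₘ (X - C z)) = F := mul_divByMonic_eq_iff_isRoot.mpr hroot
  set Qd := F /ₘ (X - C z) with hQd
  have hQdm : Qd.Monic := (monic_X_sub_C z).of_mul_monic_left (by rwa [hdvd])
  have hQdd : Qd.natDegree = N - 1 := by
    rw [hQd, natDegree_divByMonic F (monic_X_sub_C z), natDegree_X_sub_C, hFd]
  have hdvd' : F = Qd * (X - C z) := by rw [← hdvd]; ring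
  have hc0 : F.coeff 0 = Qd.coeff 0 * (-z) := by
    rw [hdvd', mul_coeff_zero]
    simp
  have hci : ∀ i, F.coeff (i + 1) = Qd.coeff i - Qd.coeff (i + 1) * z := by
    intro i
    rw [hdvd', coeff_mul_X_sub_C]
  set B : ℝ := ∑ i ∈ Finset.range (N - 1), ‖Qd.coeff i‖ with hB
  have hBnn : 0 ≤ B := Finset.sum_nonneg fun _ _ => norm_nonneg _
  have hrB : r * B ≤ B + S := by
    have hpt : ∀ i ∈ Finset.range (N - 1), r * ‖Qd.coeff i‖ ≤
        (if i = 0 then 0 else ‖Qd.coeff (i - 1)‖) + ‖F.coeff i‖ := by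
      intro i _
      rcases Nat.eq_zero_or_pos i with h | h
      · subst h
        rw [hc0, norm_mul, norm_neg, if_pos rfl, zero_add]
        exact le_of_eq (mul_comm _ _)
      · obtain ⟨j, rfl⟩ : ∃ j, i = j + 1 := ⟨i - 1, by omega⟩
        rw [if_neg (Nat.succ_ne_zero j)]
        have hjj : Qd.coeff (j + 1) * z = Qd.coeff j - F.coeff (j + 1) := by
          linear_combination hci j
        calc r * ‖Qd.coeff (j + 1)‖ = ‖Qd.coeff (j + 1) * z‖ := by rw [norm_mul]; ring
          _ = ‖Qd.coeff j - F.coeff (j + 1)‖ := by rw [hjj]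
          _ ≤ ‖Qd.coeff j‖ + ‖F.coeff (j + 1)‖ := norm_sub_le _ _
    have hsum := Finset.sum_le_sum hpt
    rw [← Finset.mul_sum] at hsum
    rw [Finset.sum_add_distrib] at hsum
    have hif : ∑ i ∈ Finset.range (N - 1), (if i = 0 then (0:ℝ) else ‖Qd.coeff (i - 1)‖) ≤ B := by
      rw [show N - 1 = (N - 2) + 1 from by omega, Finset.sum_range_succ']
      have e : (∑ i ∈ Finset.range (N - 2), if i + 1 = 0 then (0:ℝ) else ‖Qd.coeff (i + 1 - 1)‖)
          = ∑ i ∈ Finset.range (N - 2), ‖Qd.coeff i‖ :=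
        Finset.sum_congr rfl fun i _ => by norm_num
      rw [e, if_pos rfl, add_zero, hB]
      refine Finset.sum_le_sum_of_subset_of_nonneg ?_ fun _ _ _ => norm_nonneg _
      exact Finset.range_subset_range.mpr (by omega)
    calc r * B ≤ (∑ i ∈ Finset.range (N - 1), (if i = 0 then (0:ℝ) else ‖Qd.coeff (i - 1)‖)) +
          ∑ i ∈ Finset.range (N - 1), ‖F.coeff i‖ := hsum
      _ ≤ B + S := by rw [← hS]; linarith
  have hB1 : B < 1 := by
    by_contra hcon
    push_neg at hcon
    nlinarith [mul_le_mul_of_nonneg_left hcon (show (0:ℝ) ≤ r - 1 by linarith)]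
  have hQroots : ∀ w : ℂ, Qd.eval w = 0 → ‖w‖ < 1 := by
    intro w hw
    by_contra hge
    push_neg at hge
    have hbd := perron_root_bound Qd hQdm (by rw [hQdd]; omega) hw hge
    rw [hQdd, ← hB] at hbd
    linarith
  -- conclude
  have main : ∀ a b : ℤ[X], a.Monic → b.Monic → 1 ≤ b.natDegree → f = a * b →
      (a.map (Int.castRingHom ℂ)).eval z = 0 → False := by
    intro a b ha hb hdb hab hza
    have hFab : F = (a.map (Int.castRingHom ℂ)) * (b.map (Int.castRingHom ℂ)) := by
      rw [hF, hab, Polynomial.map_mul]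
    have hdvdA : (X - C z) ∣ a.map (Int.castRingHom ℂ) := dvd_iff_isRoot.mpr hza
    obtain ⟨R, hR⟩ := hdvdA
    have hQdeq : Qd = R * b.map (Int.castRingHom ℂ) := by
      have hXz : (X - C z) ≠ 0 := X_sub_C_ne_zero z
      refine mul_left_cancel₀ hXz ?_
      rw [hdvd, hFab, hR]
      ring
    have hb0 : b.coeff 0 ≠ 0 := by
      intro h
      apply h0
      rw [hab, mul_coeff_zero, h, mul_zero]
    refine perron_factor_false b hb hdb hb0 fun w hw => ?_
    apply hQroots
    rw [hQdeq, eval_mul, hw, mul_zero]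
  have hzPQ : (p.map (Int.castRingHom ℂ)).eval z * (q.map (Int.castRingHom ℂ)).eval z = 0 := by
    rw [← eval_mul, ← Polynomial.map_mul, ← hf]
    exact hz
  rcases mul_eq_zero.mp hzPQ with h | h
  · exact main p q hp hq hdq hf h
  · exact main q p hq hp hdp (by rw [hf, mul_comm]) h

theorem perron_criterion (f : ℤ[X]) (N : ℕ) (hN : 2 ≤ N)
    (hmonic : f.Monic) (hdeg : f.natDegree = N) (h0 : f.coeff 0 ≠ 0)
    (hperron : 1 + ∑ i ∈ Finset.range (N - 1), |f.coeff i| < |f.coeff (N - 1)|) :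
    Irreducible (f.map (Int.castRingHom ℚ)) := by
  have hiff := hmonic.irreducible_iff_irreducible_map_fraction_map (K := ℚ)
  rw [algebraMap_int_eq] at hiff
  rw [← hiff]
  constructor
  · intro hu
    have := natDegree_eq_zero_of_isUnit hu
    omega
  · intro a b hab
    by_contra hcon
    push_neg at hcon
    obtain ⟨hau, hbu⟩ := hcon
    have hlc : a.leadingCoeff * b.leadingCoeff = 1 := by
      rw [← leadingCoeff_mul, ← hab]
      exact hmonic
    have hmdeg : ∀ c : ℤ[X], c.Monic → ¬IsUnit c → 1 ≤ c.natDegree := by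
      intro c hc hcu
      by_contra hd
      push_neg at hd
      interval_cases h : c.natDegree
      · exact hcu (hc.natDegree_eq_zero.mp h ▸ isUnit_one)
    rcases Int.eq_one_or_neg_one_of_mul_eq_one' hlc with ⟨h1, h2⟩ | ⟨h1, h2⟩
    · have ham : a.Monic := h1
      have hbm : b.Monic := h2
      exact absurd (perron_main f N hN hmonic hdeg h0 hperron a b hab ham hbm
        (hmdeg a ham hau) (hmdeg b hbm hbu)) not_false
    · have ham : (-a).Monic := by rwa [Monic, leadingCoeff_neg, neg_eq_iff_eq_neg]
      have hbm : (-b).Monic := by rwa [Monic, leadingCoeff_neg, neg_eq_iff_eq_neg]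
      have hab' : f = (-a) * (-b) := by rw [neg_mul_neg]; exact hab
      have hau' : ¬IsUnit (-a) := fun h => hau (by simpa using h.neg)
      have hbu' : ¬IsUnit (-b) := fun h => hbu (by simpa using h.neg)
      exact absurd (perron_main f N hN hmonic hdeg h0 hperron (-a) (-b) hab' ham hbm
        (hmdeg _ ham hau') (hmdeg _ hbm hbu')) not_false
end

section
/- For integers k and N with |k| ≥ 3 and N ≥ 2, the polynomials x^N + kx + 1 and x^N - kx - 1 are irreducible over ℚ. -/
open Polynomial Finset

noncomputable def Complex.abs : AbsoluteValue ℂ ℝ where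
  toFun := fun z => ‖z‖
  map_mul' := norm_mul
  nonneg' := norm_nonneg
  eq_zero' := fun _ => norm_eq_zero
  add_le' := norm_add_le

lemma Complex.abs_intCast (n : ℤ) : Complex.abs (n : ℂ) = |(n : ℝ)| := by
  change ‖(n : ℂ)‖ = _
  exact Complex.norm_intCast n


lemma perron_key (k ε : ℤ) (N : ℕ) (hk : 3 ≤ |k|) (hN : 2 ≤ N) (hε : ε = 1 ∨ ε = -1)
    (z w : ℂ) (hz : z ^ N + (k:ℂ) * z + (ε:ℂ) = 0) (hz1 : Complex.abs z ≤ 1)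
    (hw1 : Complex.abs w ≤ 1)
    (hgw : (∑ i ∈ Finset.range (N-1), w ^ i * z ^ (N - 1 - 1 - i)) * w + ((k:ℂ) + z ^ (N-1)) = 0) :
    False := by
  obtain ⟨M, rfl⟩ : ∃ M, N = M + 1 := ⟨N - 1, by omega⟩
  set t := Complex.abs z with ht
  have hεabs : Complex.abs (ε:ℂ) = 1 := by
    rcases hε with rfl | rfl <;> simp
  have hK : (3:ℝ) ≤ (|k| : ℝ) := by exact_mod_cast hk
  have hzne : z ≠ 0 := by
    rintro rfl
    rw [zero_pow (by omega), mul_zero, zero_add, zero_add] at hz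
    rw [hz] at hεabs; simp at hεabs
  have ht0 : 0 < t := Complex.abs.pos hzne
  have htK : (|k| : ℝ) * t ≤ 2 := by
    have h1 : (k:ℂ) * z = -(z ^ (M+1) + (ε:ℂ)) := by linear_combination hz
    have h2 := congrArg Complex.abs h1
    rw [map_mul, map_neg_eq_map, Complex.abs_intCast] at h2
    calc (|k|:ℝ) * t = Complex.abs (z ^ (M+1) + (ε:ℂ)) := h2
      _ ≤ Complex.abs (z ^ (M+1)) + 1 := by
          simpa [hεabs] using Complex.abs.add_le (z ^ (M+1)) (ε:ℂ)
      _ ≤ 1 + 1 := by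
          simp only [map_pow]
          gcongr
          exact pow_le_one₀ (Complex.abs.nonneg z) hz1
      _ = 2 := by norm_num
  have hmain : (|k|:ℝ) ≤ t ^ M + ∑ i ∈ Finset.range M, t ^ (M - 1 - i) := by
    have h1 : (k:ℂ) = -((∑ i ∈ Finset.range M, w ^ i * z ^ (M - 1 - i)) * w + z ^ M) := by
      simpa using (by linear_combination hgw :
        (k:ℂ) = -((∑ i ∈ Finset.range (M+1-1), w ^ i * z ^ (M+1 - 1 - 1 - i)) * w + z ^ (M+1-1)))
    have h2 := congrArg Complex.abs h1
    rw [Complex.abs_intCast, map_neg_eq_map] at h2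
    rw [h2]
    calc Complex.abs ((∑ i ∈ Finset.range M, w ^ i * z ^ (M - 1 - i)) * w + z ^ M)
        ≤ Complex.abs ((∑ i ∈ Finset.range M, w ^ i * z ^ (M - 1 - i)) * w)
          + Complex.abs (z ^ M) := Complex.abs.add_le _ _
      _ ≤ (∑ i ∈ Finset.range M, t ^ (M - 1 - i)) * 1 + t ^ M := by
          rw [map_mul, map_pow]
          have hsum : Complex.abs (∑ i ∈ Finset.range M, w ^ i * z ^ (M - 1 - i))
              ≤ ∑ i ∈ Finset.range M, t ^ (M - 1 - i) := by
            refine (Complex.abs.sum_le _ _).trans (Finset.sum_le_sum fun i _ => ?_)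
            rw [map_mul, map_pow, map_pow]
            calc Complex.abs w ^ i * t ^ (M-1-i) ≤ 1 ^ i * t ^ (M-1-i) := by
                  have : 0 ≤ t ^ (M-1-i) := by positivity
                  exact mul_le_mul_of_nonneg_right (pow_le_pow_left₀ (Complex.abs.nonneg w) hw1 i) this
              _ = t ^ (M-1-i) := by rw [one_pow, one_mul]
          have habs : Complex.abs w ≤ 1 := hw1
          have h0 : 0 ≤ Complex.abs (∑ i ∈ Finset.range M, w ^ i * z ^ (M - 1 - i)) :=
            Complex.abs.nonneg _
          nlinarith [hsum, habs, h0, Complex.abs.nonneg w]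
      _ = ∑ i ∈ Finset.range M, t ^ (M - 1 - i) + t ^ M := by ring
      _ = t ^ M + ∑ i ∈ Finset.range M, t ^ (M - 1 - i) := by ring
  rw [Finset.sum_range_reflect (fun j => t ^ j) M] at hmain
  have hS : (|k|:ℝ) ≤ ∑ j ∈ Finset.range (M+1), t ^ j := by
    rw [Finset.sum_range_succ]
    linarith [hmain]
  have hgeo := geom_sum_mul t (M+1)
  have htN : 0 < t ^ (M+1) := pow_pos ht0 _
  have h1t : 0 ≤ 1 - t := by linarith
  nlinarith [mul_le_mul_of_nonneg_right hS h1t, htN, htK, hK, hz1]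


lemma exists_small_root (f : ℤ[X]) (hf : f.Monic) (hd : f.natDegree ≠ 0) (h0 : |f.coeff 0| = 1) :
    ∃ r : ℂ, ((f.map (Int.castRingHom ℂ)).IsRoot r) ∧ Complex.abs r ≤ 1 := by
  set F := f.map (Int.castRingHom ℂ) with hF
  have hFm : F.Monic := hf.map _
  have hsplit : F.Splits := IsAlgClosed.splits F
  have hdeg : F.natDegree = f.natDegree := by
    rw [hF, natDegree_map_eq_of_injective Int.cast_injective]
  have hcard : F.roots.card = f.natDegree := by
    rw [(splits_iff_card_roots).mp hsplit, hdeg]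
  have hne : F.roots ≠ 0 := by
    intro h; rw [h] at hcard; simp at hcard; omega
  have hprodC : F = (F.roots.map fun a => X - C a).prod :=
    hsplit.eq_prod_roots_of_monic hFm
  have hev : Complex.abs (F.eval 0) = 1 := by
    have h1 : F.eval 0 = ((f.coeff 0 : ℤ) : ℂ) := by
      rw [← coeff_zero_eq_eval_zero, hF, coeff_map]; rfl
    rw [h1, Complex.abs_intCast]
    exact_mod_cast congrArg (Int.cast : ℤ → ℝ) h0
  have hprod : (F.roots.map Complex.abs).prod = 1 := by
    have h1 : F.eval 0 = (F.roots.map fun a => (0:ℂ) - a).prod := by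
      conv_lhs => rw [hprodC]
      rw [eval_multiset_prod, Multiset.map_map]
      exact congrArg Multiset.prod (Multiset.map_congr rfl fun a _ => by simp)
    have h2 := congrArg Complex.abs h1
    rw [hev, map_multiset_prod, Multiset.map_map] at h2
    rw [h2]
    exact congrArg Multiset.prod (Multiset.map_congr rfl fun a _ => by simp)
  by_contra hcon
  push_neg at hcon
  obtain ⟨r, hr⟩ := Multiset.exists_mem_of_ne_zero hne
  have hrabs : 1 < Complex.abs r := by
    exact hcon r ((mem_roots hFm.ne_zero).mp hr)
  obtain ⟨s, hs⟩ := Multiset.exists_cons_of_mem hr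
  rw [hs, Multiset.map_cons, Multiset.prod_cons] at hprod
  have hsge : 1 ≤ (s.map Complex.abs).prod := by
    apply Multiset.one_le_prod
    intro x hx
    obtain ⟨a, ha, rfl⟩ := Multiset.mem_map.mp hx
    have haF : a ∈ F.roots := by rw [hs]; exact Multiset.mem_cons_of_mem ha
    exact le_of_lt (hcon a ((mem_roots hFm.ne_zero).mp haF))
  nlinarith [hprod, hrabs, hsge]

lemma perron_int (k ε : ℤ) (N : ℕ) (hk : 3 ≤ |k|) (hN : 2 ≤ N) (hε : ε = 1 ∨ ε = -1) :
    Irreducible (X ^ N + C k * X + C ε : ℤ[X]) := by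
  have h1 : (C k * X + C ε : ℤ[X]).degree < (X ^ N : ℤ[X]).degree := by
    rw [degree_X_pow]
    exact lt_of_le_of_lt degree_linear_le (by exact_mod_cast (by omega : 1 < N))
  have hpm : (X ^ N + C k * X + C ε : ℤ[X]).Monic := by
    rw [add_assoc]
    exact (monic_X_pow N).add_of_left h1
  have hdeg : (X ^ N + C k * X + C ε : ℤ[X]).degree = N := by
    rw [add_assoc, degree_add_eq_left_of_degree_lt h1, degree_X_pow]
  have hndeg : (X ^ N + C k * X + C ε : ℤ[X]).natDegree = N :=
    natDegree_eq_of_degree_eq_some hdeg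
  have h0coeff : (X ^ N + C k * X + C ε : ℤ[X]).coeff 0 = ε := by
    simp [coeff_X_pow]
    omega
  rw [hpm.irreducible_iff_natDegree]
  refine ⟨fun h1 => by rw [h1] at hndeg; simp at hndeg; omega, ?_⟩
  intro f g hf hg hfg
  by_contra hcon
  push_neg at hcon
  obtain ⟨hf0, hg0⟩ := hcon
  have hc : f.coeff 0 * g.coeff 0 = ε := by
    rw [← mul_coeff_zero, hfg, h0coeff]
  have habs : ∀ a b : ℤ, a * b = 1 → |a| = 1 := fun a b h => by
    rcases Int.isUnit_iff.mp (IsUnit.of_mul_eq_one b h) with h' | h' <;> simp [h']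
  have hfabs : |f.coeff 0| = 1 :=
    habs _ (g.coeff 0 * ε) (by rw [← mul_assoc, hc]; rcases hε with rfl | rfl <;> norm_num)
  have hgabs : |g.coeff 0| = 1 :=
    habs _ (f.coeff 0 * ε)
      (by rw [← mul_assoc, mul_comm (g.coeff 0), hc]; rcases hε with rfl | rfl <;> norm_num)
  obtain ⟨zf, hzfroot, hzf1⟩ := exists_small_root f hf hf0 hfabs
  obtain ⟨zg, hzgroot, hzg1⟩ := exists_small_root g hg hg0 hgabs
  set P : ℂ[X] := (X ^ N + C k * X + C ε : ℤ[X]).map (Int.castRingHom ℂ) with hP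
  have hPeq : P = X ^ N + C (k:ℂ) * X + C (ε:ℂ) := by
    simp [hP, Polynomial.map_add, Polynomial.map_mul, Polynomial.map_pow]
  have hPfg : P = (f.map (Int.castRingHom ℂ)) * (g.map (Int.castRingHom ℂ)) := by
    rw [hP, ← hfg, Polynomial.map_mul]
  have hzP : zf ^ N + (k:ℂ) * zf + (ε:ℂ) = 0 := by
    have hev : P.eval zf = 0 := by
      rw [hPfg, eval_mul, hzfroot.eq_zero, zero_mul]
    rw [hPeq] at hev
    simpa using hev
  obtain ⟨M, rfl⟩ : ∃ M, N = M + 1 := ⟨N - 1, by omega⟩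
  set g' : ℂ[X] := (∑ i ∈ Finset.range M, X ^ i * C zf ^ (M - 1 - i)) * X
      + (C (k:ℂ) + C zf ^ M) with hg'
  have key : X ^ (M+1) + C (k:ℂ) * X + C (ε:ℂ) = g' * (X - C zf) := by
    have hgs := geom_sum₂_mul (X : ℂ[X]) (C zf) M
    have h2 : (C zf) ^ (M+1) + C (k:ℂ) * C zf + C (ε:ℂ) = 0 := by
      rw [← map_pow, ← map_mul, ← map_add, ← map_add, hzP, map_zero]
    rw [hg']
    linear_combination (-(X : ℂ[X])) * hgs + h2
  have hg'root : ∃ w : ℂ, Complex.abs w ≤ 1 ∧ g'.eval w = 0 := by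
    by_cases hzz : zg = zf
    · have d1 : (X - C zf) ∣ f.map (Int.castRingHom ℂ) := dvd_iff_isRoot.mpr hzfroot
      have d2 : (X - C zf) ∣ g.map (Int.castRingHom ℂ) :=
        dvd_iff_isRoot.mpr (hzz ▸ hzgroot)
      have d3 : (X - C zf) * (X - C zf) ∣ g' * (X - C zf) := by
        rw [← key, ← hPeq, hPfg]
        exact mul_dvd_mul d1 d2
      have d4 : (X - C zf) ∣ g' := (mul_dvd_mul_iff_right (X_sub_C_ne_zero zf)).mp d3
      exact ⟨zf, hzf1, dvd_iff_isRoot.mp d4⟩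
    · refine ⟨zg, hzg1, ?_⟩
      have hev : P.eval zg = 0 := by
        rw [hPfg, eval_mul, hzgroot.eq_zero, mul_zero]
      rw [hPeq, key] at hev
      rw [eval_mul] at hev
      rcases mul_eq_zero.mp hev with h | h
      · exact h
      · exact absurd (sub_eq_zero.mp (by simpa using h)) hzz
  obtain ⟨w, hw1, hwg⟩ := hg'root
  have hsum : (∑ i ∈ Finset.range M, w ^ i * zf ^ (M - 1 - i)) * w + ((k:ℂ) + zf ^ M) = 0 := by
    have := hwg
    simp only [hg', eval_add, eval_mul, eval_finset_sum, eval_pow, eval_X, eval_C] at this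
    convert this using 2
  exact perron_key k ε (M+1) hk hN hε zf w hzP hzf1 hw1 hsum


lemma perron_rat (k ε : ℤ) (N : ℕ) (hk : 3 ≤ |k|) (hN : 2 ≤ N) (hε : ε = 1 ∨ ε = -1) :
    Irreducible (X ^ N + C (k:ℚ) * X + C (ε:ℚ) : ℚ[X]) := by
  have hint := perron_int k ε N hk hN hε
  have h1 : (C k * X + C ε : ℤ[X]).degree < (X ^ N : ℤ[X]).degree := by
    rw [degree_X_pow]
    exact lt_of_le_of_lt degree_linear_le (by exact_mod_cast (by omega : 1 < N))
  have hpm : (X ^ N + C k * X + C ε : ℤ[X]).Monic := by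
    rw [add_assoc]
    exact (monic_X_pow N).add_of_left h1
  have h := (IsPrimitive.Int.irreducible_iff_irreducible_map_cast hpm.isPrimitive).mp hint
  have hmap : (X ^ N + C k * X + C ε : ℤ[X]).map (Int.castRingHom ℚ)
      = (X ^ N + C (k:ℚ) * X + C (ε:ℚ) : ℚ[X]) := by
    simp [Polynomial.map_add, Polynomial.map_mul, Polynomial.map_pow]
  rwa [hmap] at h

theorem irreducible_xN_pm_kx_pm_one (k : ℤ) (N : ℕ) (hk : 3 ≤ |k|) (hN : 2 ≤ N) :
    Irreducible (X ^ N + C (k : ℚ) * X + 1 : ℚ[X]) ∧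
    Irreducible (X ^ N - C (k : ℚ) * X - 1 : ℚ[X]) := by
  constructor
  · have h := perron_rat k 1 N hk hN (Or.inl rfl)
    simpa using h
  · have h := perron_rat (-k) (-1) N (by rwa [abs_neg]) hN (Or.inr rfl)
    have heq : (X ^ N + C ((-k : ℤ):ℚ) * X + C ((-1 : ℤ):ℚ) : ℚ[X])
        = X ^ N - C (k : ℚ) * X - 1 := by
      push_cast
      simp only [map_neg, map_one]
      ring
    rwa [heq] at h
end

section
/- There are no integers s, t, u, v such that x^6 + kx^5 + lx + 1 = (x³ + sx² + tx + 1)(x³ + ux² + vx + 1) or x^6 + kx^5 + lx + 1 = (x³ + sx² + tx - 1)(x³ + ux² + vx - 1) for any integers k ≠ l. -/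
open Polynomial

lemma cube_ne_two (s : ℤ) : s ^ 3 ≠ 2 := by
  intro h
  rcases (by omega : s ≤ 0 ∨ s = 1 ∨ 2 ≤ s) with h1 | h1 | h1
  · nlinarith [sq_nonneg s]
  · simp [h1] at h
  · nlinarith [sq_nonneg s]

lemma cube_ne_neg_two (s : ℤ) : s ^ 3 ≠ -2 := by
  intro h
  apply cube_ne_two (-s)
  ring_nf
  linarith [h]

lemma sq_eq_sq_add_four {c d : ℤ} (h : c ^ 2 = d ^ 2 + 4) : d = 0 := by
  have ha : (0:ℤ) ≤ |d| := abs_nonneg d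
  have hb : (0:ℤ) ≤ |c| := abs_nonneg c
  have hsq : |c| ^ 2 = |d| ^ 2 + 4 := by rw [sq_abs, sq_abs]; exact h
  have h1 : |d| < |c| := by nlinarith
  have h2 : |c| ≤ |d| + 2 := by nlinarith
  have h3 : |c| = |d| + 1 ∨ |c| = |d| + 2 := by omega
  have hd0 : |d| = 0 := by
    rcases h3 with h3 | h3 <;> rw [h3] at hsq
    · have : 2 * |d| = 3 := by linear_combination hsq
      omega
    · have : 4 * |d| = 0 := by linear_combination hsq
      omega
  simpa using abs_eq_zero.mp hd0

theorem no_cubic_cubic_factorization (k l : ℤ) (hkl : k ≠ l) (s t u v : ℤ) :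
    ¬ ((X ^ 6 + C k * X ^ 5 + C l * X + 1 : ℤ[X]) =
          (X ^ 3 + C s * X ^ 2 + C t * X + 1) * (X ^ 3 + C u * X ^ 2 + C v * X + 1) ∨
       (X ^ 6 + C k * X ^ 5 + C l * X + 1 : ℤ[X]) =
          (X ^ 3 + C s * X ^ 2 + C t * X - 1) * (X ^ 3 + C u * X ^ 2 + C v * X - 1)) := by
  rintro (h | h)
  · rw [show (X ^ 3 + C s * X ^ 2 + C t * X + 1 : ℤ[X]) * (X ^ 3 + C u * X ^ 2 + C v * X + 1) =
        X^6 + C (s+u)*X^5 + C (t+v+s*u)*X^4 + C (s*v+t*u+2)*X^3 + C (s+u+t*v)*X^2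
          + C (t+v)*X + 1 by simp only [C_add, C_mul, map_ofNat]; ring] at h
    have h2 := congrArg (fun p => Polynomial.coeff p 2) h
    have h3 := congrArg (fun p => Polynomial.coeff p 3) h
    have h4 := congrArg (fun p => Polynomial.coeff p 4) h
    simp only [coeff_add, coeff_C_mul, coeff_X_pow, coeff_one, coeff_X, mul_ite, mul_one,
      mul_zero] at h2 h3 h4
    norm_num at h2 h3 h4
    -- h4 : 0 = t+v+s*u, h3 : 0 = s*v+t*u+2, h2 : 0 = s+u+t*v
    have e1 : t + v + s * u = 0 := h4.symm
    have e2 : s * v + t * u + 2 = 0 := h3.symm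
    have e3 : s + u + t * v = 0 := h2.symm
    have hsum : s * t + u * v = (s + u) * (t + v) + 2 := by linear_combination -e2
    have hprod : (s * t) * (u * v) = (s + u) * (t + v) := by
      linear_combination t * v * e1 - (t + v) * e3
    have key : (s * t - u * v) ^ 2 = ((s + u) * (t + v)) ^ 2 + 4 := by
      linear_combination (s * t + u * v + (s + u) * (t + v) + 2) * hsum - 4 * hprod
    have hab : (s + u) * (t + v) = 0 := sq_eq_sq_add_four key
    rcases mul_eq_zero.mp hab with ha | hb
    · have hu : u = -s := by linarith
      subst hu
      have htv : t * v = 0 := by linarith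
      rcases mul_eq_zero.mp htv with ht | hv
      · subst ht
        have hv : v = s ^ 2 := by nlinarith [e1]
        exact cube_ne_neg_two s (by linear_combination e2 - s * hv)
      · subst hv
        have ht : t = s ^ 2 := by nlinarith [e1]
        exact cube_ne_two s (by linear_combination -e2 - s * ht)
    · have hv : v = -t := by linarith
      subst hv
      have hsu : s * u = 0 := by linarith
      rcases mul_eq_zero.mp hsu with hs | hu
      · subst hs
        have hu : u = t ^ 2 := by nlinarith [e3]
        exact cube_ne_neg_two t (by linear_combination e2 - t * hu)
      · subst hu
        have hs : s = t ^ 2 := by nlinarith [e3]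
        exact cube_ne_two t (by linear_combination -e2 - t * hs)
  · rw [show (X ^ 3 + C s * X ^ 2 + C t * X - 1 : ℤ[X]) * (X ^ 3 + C u * X ^ 2 + C v * X - 1) =
        X^6 + C (s+u)*X^5 + C (t+v+s*u)*X^4 + C (s*v+t*u-2)*X^3 + C (t*v-s-u)*X^2
          + C (-(t+v))*X + 1 by simp only [C_add, C_sub, C_mul, C_neg, map_ofNat]; ring] at h
    have h2 := congrArg (fun p => Polynomial.coeff p 2) h
    have h3 := congrArg (fun p => Polynomial.coeff p 3) h
    have h4 := congrArg (fun p => Polynomial.coeff p 4) h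
    simp only [coeff_add, coeff_C_mul, coeff_X_pow, coeff_one, coeff_X, mul_ite, mul_one,
      mul_zero] at h2 h3 h4
    norm_num at h2 h3 h4
    have e1 : t + v + s * u = 0 := h4.symm
    have e2 : s * v + t * u - 2 = 0 := h3.symm
    have e3 : t * v - s - u = 0 := h2.symm
    have hsum : s * t + u * v = (s + u) * (t + v) - 2 := by linear_combination -e2
    have hprod : (s * t) * (u * v) = -((s + u) * (t + v)) := by
      linear_combination t * v * e1 - (t + v) * e3
    have key : (s * t - u * v) ^ 2 = ((s + u) * (t + v)) ^ 2 + 4 := by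
      linear_combination (s * t + u * v + (s + u) * (t + v) - 2) * hsum - 4 * hprod
    have hab : (s + u) * (t + v) = 0 := sq_eq_sq_add_four key
    rcases mul_eq_zero.mp hab with ha | hb
    · have hu : u = -s := by linarith
      subst hu
      have htv : t * v = 0 := by nlinarith [e3]
      rcases mul_eq_zero.mp htv with ht | hv
      · subst ht
        have hv : v = s ^ 2 := by nlinarith [e1]
        exact cube_ne_two s (by linear_combination e2 - s * hv)
      · subst hv
        have ht : t = s ^ 2 := by nlinarith [e1]
        exact cube_ne_neg_two s (by linear_combination -e2 - s * ht)
    · have hv : v = -t := by linarith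
      subst hv
      have hsu : s * u = 0 := by linarith
      rcases mul_eq_zero.mp hsu with hs | hu
      · subst hs
        have hu : u = -(t ^ 2) := by nlinarith [e3]
        exact cube_ne_neg_two t (by linear_combination t * hu - e2)
      · subst hu
        have hs : s = -(t ^ 2) := by nlinarith [e3]
        exact cube_ne_two t (by linear_combination e2 + t * hs)
end
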